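/- Let D be an open convex domain in an affine space Aⁿ ⊂ ℝP^n that is not properly convex (its closure contains a complete affine line). Then D contains a complete affine subspace of maximal dimension i ≥ 1, any two maximal complete affine subspaces contained in D are disjoint, and the maximal complete affine subspaces of D foliate D; their common boundary is a fixed projective subspace S^{i-1} contained in ∂D, invariant under any group of projective automorphisms of D. -/

import Mathlib

open Filter Topology

section
variable {n : ℕ}
abbrev E (n : ℕ) := EuclideanSpace ℝ (Fin n)

lemma keyc {D : Set (E n)} (hDc : Convex ℝ D) {z w : E n}
    (hz : ∀ t : ℝ, z + t • w ∈ closure D) {x : E n} (hx : x ∈ closure D) :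
    ∀ t : ℝ, x + t • w ∈ closure D := by
  intro t
  have hzc : z ∈ closure D := by simpa using hz 0
  have hmem : ∀ k : ℕ, x + ((1:ℝ)/(k+1)) • (z - x) + t • w ∈ closure D := by
    intro k
    have hk : ((k:ℝ)+1) ≠ 0 := by positivity
    have hk' : (0:ℝ) < (1:ℝ)/(k+1) := by positivity
    have hk1 : (1:ℝ)/(k+1) ≤ 1 := by
      rw [div_le_one (by positivity)]; linarith [Nat.cast_nonneg (α := ℝ) k]
    set l : ℝ := (1:ℝ)/(k+1) with hl
    have hls : l * (l⁻¹ * t) = t := by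
      field_simp
    have := hDc.closure hx (hz (l⁻¹ * t)) (a := 1 - l) (b := l) (by linarith) hk'.le (by ring)
    have heq : (1 - l) • x + l • (z + (l⁻¹ * t) • w) = x + l • (z - x) + t • w := by
      rw [smul_add, smul_smul, hls]; module
    rwa [heq] at this
  have htend : Tendsto (fun k : ℕ => x + ((1:ℝ)/(k+1)) • (z - x) + t • w) atTop
      (𝓝 (x + t • w)) := by
    have h0 := tendsto_one_div_add_atTop_nhds_zero_nat (𝕜 := ℝ)
    have h1 : Tendsto (fun k : ℕ => x + ((1:ℝ)/(k+1)) • (z - x) + t • w) atTop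
        (𝓝 (x + (0:ℝ) • (z - x) + t • w)) :=
      ((tendsto_const_nhds (x := x) (f := atTop (α := ℕ))).add (h0.smul_const (z - x))).add
        tendsto_const_nhds
    simpa using h1
  exact isClosed_closure.mem_of_tendsto htend (Eventually.of_forall hmem)

lemma keyD {D : Set (E n)} (hDo : IsOpen D) (hDc : Convex ℝ D) {z w : E n}
    (hz : ∀ t : ℝ, z + t • w ∈ closure D) {x : E n} (hx : x ∈ D) :
    ∀ t : ℝ, x + t • w ∈ D := by
  intro t
  have h2 : x + (2*t) • w ∈ closure D := keyc hDc hz (subset_closure hx) (2*t)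
  have hxi : x ∈ interior D := by rwa [hDo.interior_eq]
  have hseg : x + t • w ∈ openSegment ℝ x (x + (2*t) • w) := by
    refine ⟨1/2, 1/2, by norm_num, by norm_num, by norm_num, ?_⟩
    module
  have := hDc.openSegment_interior_closure_subset_interior hxi h2 hseg
  rwa [hDo.interior_eq] at this
end


/-- A convex open domain `D` in affine `n`-space that is not properly
convex (its closure contains a complete affine line) is foliated by maximal complete
affine subspaces: there is a linear subspace `W` of dimension `≥ 1` such that, through
every point `x ∈ D`, the directions of complete affine lines contained in `D` are exactly
the vectors of `W` (so the leaves `x + W` are the maximal complete affine subspaces and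
they partition `D`); moreover `W` (the common boundary subspace at infinity) is invariant
under every affine automorphism preserving `D`. -/
theorem nonproperly_convex_domain_foliated_by_complete_affine_subspaces
    (n : ℕ) (D : Set (EuclideanSpace ℝ (Fin n)))
    (hDo : IsOpen D) (hDc : Convex ℝ D) (hDne : D.Nonempty)
    (hline : ∃ x v : EuclideanSpace ℝ (Fin n), v ≠ 0 ∧ ∀ t : ℝ, x + t • v ∈ closure D) :
    ∃ W : Submodule ℝ (EuclideanSpace ℝ (Fin n)),
      W ≠ ⊥ ∧
      (∀ x ∈ D, ∀ w : EuclideanSpace ℝ (Fin n), (∀ t : ℝ, x + t • w ∈ D) ↔ w ∈ W) ∧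
      ∀ g : EuclideanSpace ℝ (Fin n) ≃ᵃ[ℝ] EuclideanSpace ℝ (Fin n),
        g '' D = D → W.map g.linear.toLinearMap = W := by
  obtain ⟨x₀, hx₀⟩ := hDne
  obtain ⟨y, v, hv, hyv⟩ := hline
  set W : Submodule ℝ (EuclideanSpace ℝ (Fin n)) :=
    { carrier := {w | ∀ t : ℝ, x₀ + t • w ∈ D}
      zero_mem' := by intro t; simpa using hx₀
      add_mem' := by
        intro a b ha hb t
        have := hDc (ha (2*t)) (hb (2*t)) (a := 1/2) (b := 1/2) (by norm_num) (by norm_num) (by norm_num)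
        convert this using 1
        module
      smul_mem' := by
        intro c w hw t
        have := hw (t * c)
        convert this using 2
        module } with hW
  have hWmem : ∀ w, w ∈ W ↔ ∀ t : ℝ, x₀ + t • w ∈ D := fun w => Iff.rfl
  have hchar : ∀ x ∈ D, ∀ w : EuclideanSpace ℝ (Fin n),
      (∀ t : ℝ, x + t • w ∈ D) ↔ w ∈ W := by
    intro x hx w
    constructor
    · intro h
      exact keyD hDo hDc (fun t => subset_closure (h t)) hx₀
    · intro h
      exact keyD hDo hDc (fun t => subset_closure (h t)) hx
  refine ⟨W, ?_, hchar, ?_⟩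
  · have hvW : v ∈ W := keyD hDo hDc hyv hx₀
    intro hbot
    rw [hbot] at hvW
    exact hv (by simpa using hvW)
  · intro g hg
    have hD : ∀ x ∈ D, g x ∈ D := by
      intro x hx; rw [← hg]; exact ⟨x, hx, rfl⟩
    have hDsymm : ∀ x ∈ D, g.symm x ∈ D := by
      intro x hx
      rw [← hg] at hx
      obtain ⟨u, hu, rfl⟩ := hx
      simpa using hu
    have hgline : ∀ (h : EuclideanSpace ℝ (Fin n) ≃ᵃ[ℝ] EuclideanSpace ℝ (Fin n))
        (x w : EuclideanSpace ℝ (Fin n)) (t : ℝ), h (x + t • w) = h x + t • h.linear (w) := by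
      intro h x w t
      have := h.toAffineMap.map_vadd x (t • w)
      simpa [add_comm, map_smul] using this
    have hfwd : ∀ w ∈ W, g.linear w ∈ W := by
      intro w hw
      rw [← hchar (g x₀) (hD x₀ hx₀)]
      intro t
      have := hD _ (hw t)
      rwa [hgline] at this
    apply le_antisymm
    · rintro _ ⟨w, hw, rfl⟩
      exact hfwd w hw
    · intro w hw
      have hgsymm : g.symm.linear w ∈ W := by
        rw [← hchar (g.symm x₀) (hDsymm x₀ hx₀)]
        intro t
        have := hDsymm _ (hw t)
        rwa [hgline] at this
      refine ⟨g.symm.linear w, hgsymm, ?_⟩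
      rw [AffineEquiv.linear_symm]
      exact g.linear.apply_symm_apply w
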